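/- (Laplacian kernel bound) Let x_1,…,x_N ∈ ℝⁿ be nonzero, r_x = min_t ‖x_t‖₂ > 0, y_t = x_tᵀθ° + v_t, ε ≥ 0, I_ε^0 = {t : |v_t| ≤ ε}, γ₁ > 0 and α ∈ (0,1]. Assume ρ_α(X)/(1 + e^{−γ₁ε}) + e^{−γ₁ε}·|I_ε^0|/N > 1. Then for any maximizer θ* over ℝⁿ of θ ↦ ∑_{k=1}^N exp(−γ₁|y_k − x_kᵀθ|), it holds that ‖θ* − θ°‖₂ ≤ (1/(γ₁·α·r_x))·ln(1/μ), where μ = [(1+e^{−γ₁ε})/(|I_ε^0|/N + ρ_α(X) − 1)]·[ρ_α(X)/(1+e^{−γ₁ε}) + e^{−γ₁ε}·|I_ε^0|/N − 1]. -/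

import Mathlib

open scoped BigOperators

noncomputable section

/-- Euclidean dot product on `ℝⁿ`. -/
def dotR {n : ℕ} (u v : Fin n → ℝ) : ℝ := ∑ i, u i * v i

/-- Euclidean 2-norm on `ℝⁿ`. -/
def nrm {n : ℕ} (v : Fin n → ℝ) : ℝ := Real.sqrt (∑ i, v i ^ 2)

/-- The index set `𝓘_α(X,η) = {t : |x_tᵀη| ≥ α‖x_t‖₂‖η‖₂}`. -/
def Iset {n N : ℕ} (x : Fin N → Fin n → ℝ) (a : ℝ) (η : Fin n → ℝ) : Finset (Fin N) :=
  Finset.univ.filter fun t => a * nrm (x t) * nrm η ≤ |dotR (x t) η|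

/-- The correlation measure `ρ_α(X) = (1/N)·inf_{η ≠ 0} |𝓘_α(X,η)|`. -/
def rhoX {n N : ℕ} (x : Fin N → Fin n → ℝ) (a : ℝ) : ℝ :=
  (1 / N) * sInf ((fun η : Fin n → ℝ => ((Iset x a η).card : ℝ)) '' {η | η ≠ 0})

/-- The constant `μ` as a function of `s = e^{-γ₁ε}`, `q = |I_ε^0|/N` and `ρ = ρ_α(X)`. -/
def muVal (s q ρ : ℝ) : ℝ := (1 + s) / (q + ρ - 1) * (ρ / (1 + s) + s * q - 1)

lemma nrm_nonneg' {n : ℕ} (v : Fin n → ℝ) : 0 ≤ nrm v := Real.sqrt_nonneg _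

lemma nrm_pos' {n : ℕ} {v : Fin n → ℝ} (h : v ≠ 0) : 0 < nrm v := by
  obtain ⟨i, hi⟩ := Function.ne_iff.mp h
  apply Real.sqrt_pos.mpr
  calc (0:ℝ) < v i ^ 2 := lt_of_le_of_ne (sq_nonneg _) (Ne.symm (pow_ne_zero 2 hi))
    _ ≤ ∑ j, v j ^ 2 :=
      Finset.single_le_sum (f := fun j => v j ^ 2) (fun j _ => sq_nonneg _) (Finset.mem_univ i)

lemma dotR_sub' {n : ℕ} (u w z : Fin n → ℝ) : dotR u (w - z) = dotR u w - dotR u z := by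
  simp [dotR, mul_sub, Finset.sum_sub_distrib]

set_option maxHeartbeats 2000000 in
/-- the error bound for the Laplacian-kernel maximum correntropy
estimator (`ℓ(a) = |a|`). -/
theorem mce_laplacian_bound {n N : ℕ} (hN : 0 < N)
    (x : Fin N → Fin n → ℝ) (hx : ∀ t, x t ≠ 0)
    (θo : Fin n → ℝ) (v y : Fin N → ℝ)
    (hy : ∀ t, y t = dotR (x t) θo + v t)
    (ε : ℝ) (hε : 0 ≤ ε)
    (γ₁ : ℝ) (hγ₁ : 0 < γ₁) (a : ℝ) (ha : 0 < a) (ha1 : a ≤ 1)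
    (hstab : 1 <
      rhoX x a / (1 + Real.exp (-(γ₁ * ε))) +
        Real.exp (-(γ₁ * ε)) *
          (((Finset.univ.filter fun t => |v t| ≤ ε).card : ℝ) / N))
    (θs : Fin n → ℝ)
    (hmax : ∀ θ : Fin n → ℝ,
      ∑ k, Real.exp (-(γ₁ * |y k - dotR (x k) θ|)) ≤
        ∑ k, Real.exp (-(γ₁ * |y k - dotR (x k) θs|))) :
    nrm (θs - θo) ≤
      (1 / (γ₁ * a * (⨅ t, nrm (x t)))) *
        Real.log (1 /
          muVal (Real.exp (-(γ₁ * ε)))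
            (((Finset.univ.filter fun t => |v t| ≤ ε).card : ℝ) / N)
            (rhoX x a)) := by
  have hNe : Nonempty (Fin N) := ⟨⟨0, hN⟩⟩
  set s := Real.exp (-(γ₁ * ε)) with hs_def
  set I0 : Finset (Fin N) := Finset.univ.filter fun t => |v t| ≤ ε with hI0_def
  set q : ℝ := (I0.card : ℝ) / N with hq_def
  set ρ := rhoX x a with hρ_def
  set r := ⨅ t, nrm (x t) with hr_def
  clear_value s I0 q ρ r
  have hNR : (0:ℝ) < N := by exact_mod_cast hN
  have hs0 : 0 < s := hs_def ▸ Real.exp_pos _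
  have hs1 : s ≤ 1 := by
    rw [hs_def]
    exact Real.exp_le_one_iff.mpr (by nlinarith)
  have hq0 : 0 ≤ q := by rw [hq_def]; positivity
  have hq1 : q ≤ 1 := by
    rw [hq_def, div_le_one hNR]
    have : I0.card ≤ N := (Finset.card_le_univ _).trans_eq (by simp)
    exact_mod_cast this
  have hρ0 : 0 ≤ ρ := by
    rw [hρ_def, rhoX]
    apply mul_nonneg (by positivity)
    apply Real.sInf_nonneg
    rintro z ⟨η', -, rfl⟩; positivity
  have hρle : ∀ η : Fin n → ℝ, η ≠ 0 → ρ ≤ ((Iset x a η).card : ℝ) / N := by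
    intro η hη
    have hb : BddBelow ((fun η : Fin n → ℝ => ((Iset x a η).card : ℝ)) '' {η | η ≠ 0}) :=
      ⟨0, by rintro z ⟨η', -, rfl⟩; positivity⟩
    have hle : sInf ((fun η : Fin n → ℝ => ((Iset x a η).card : ℝ)) '' {η | η ≠ 0})
        ≤ ((Iset x a η).card : ℝ) := csInf_le hb ⟨η, hη, rfl⟩
    rw [hρ_def, rhoX]
    calc (1 / (N:ℝ)) * sInf _ ≤ (1 / (N:ℝ)) * ((Iset x a η).card : ℝ) :=
          mul_le_mul_of_nonneg_left hle (by positivity)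
      _ = ((Iset x a η).card : ℝ) / N := by ring
  have hsq1 : s * q ≤ 1 := by nlinarith
  have hrle : ∀ t, r ≤ nrm (x t) := by
    intro t
    rw [hr_def]
    exact ciInf_le (Set.Finite.bddBelow (Set.finite_range _)) t
  have hr0 : 0 < r := by
    rw [hr_def]
    obtain ⟨t0, ht0⟩ := Finite.exists_min (fun t => nrm (x t))
    exact lt_of_lt_of_le (nrm_pos' (hx t0)) (le_ciInf ht0)
  have h1 : 0 < q + ρ - 1 := by
    have h1a : ρ / (1 + s) ≤ ρ := div_le_self hρ0 (by linarith)
    have h1b : s * q ≤ q := by nlinarith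
    linarith
  have hfac2 : 0 < ρ / (1 + s) + s * q - 1 := by linarith
  have hμpos : 0 < muVal s q ρ := by
    rw [muVal]
    exact mul_pos (div_pos (by linarith) h1) hfac2
  rcases Nat.eq_zero_or_pos n with hn | hn
  · -- n = 0 : contradiction with hstab
    subst hn
    have hρz : ρ = 0 := by
      rw [hρ_def, rhoX]
      have he : {η : Fin 0 → ℝ | η ≠ 0} = ∅ := by
        ext η; simp [Subsingleton.elim η 0]
      rw [he]
      simp [Real.sInf_empty]
    rw [hρz, zero_div] at hstab
    linarith
  · have hρ1 : ρ ≤ 1 := by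
      have hne : (fun _ : Fin n => (1:ℝ)) ≠ 0 := by
        intro h
        have := congrFun h ⟨0, hn⟩
        simp at this
      refine (hρle _ hne).trans ?_
      rw [div_le_one hNR]
      have : (Iset x a fun _ => (1:ℝ)).card ≤ N := (Finset.card_le_univ _).trans_eq (by simp)
      exact_mod_cast this
    have hμ1 : muVal s q ρ ≤ 1 := by
      rw [muVal, div_mul_eq_mul_div, div_le_one h1]
      have h1s : (0:ℝ) < 1 + s := by linarith
      have heq : (1 + s) * (ρ / (1 + s) + s * q - 1) = ρ + s * q * (1 + s) - (1 + s) := by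
        field_simp
      rw [heq]
      nlinarith [mul_nonneg (mul_nonneg hs0.le hq0) (sub_nonneg.mpr hs1),
        mul_nonneg hq0 (sub_nonneg.mpr hs1), mul_nonneg hs0.le (sub_nonneg.mpr hsq1)]
    have hlog0 : 0 ≤ Real.log (1 / muVal s q ρ) :=
      Real.log_nonneg (one_le_one_div hμpos hμ1)
    by_cases hη0 : θs - θo = 0
    · rw [hη0]
      have hz : nrm (0 : Fin n → ℝ) = 0 := by simp [nrm]
      rw [hz]
      exact mul_nonneg (by positivity) hlog0
    · set η := θs - θo with hη_def
      set D := a * r * nrm η with hD_def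
      set c := Real.exp (-(γ₁ * max (D - ε) 0)) with hc_def
      set S := Iset x a η ∩ I0 with hS_def
      clear_value η D c S
      have hnη : 0 < nrm η := nrm_pos' hη0
      have hD0 : 0 ≤ D := by rw [hD_def]; positivity
      have hc0 : 0 < c := hc_def ▸ Real.exp_pos _
      have hc1 : c ≤ 1 := by
        rw [hc_def]
        exact Real.exp_le_one_iff.mpr (by nlinarith [le_max_right (D - ε) (0:ℝ)])
      have hMcard : (Iset x a η).card + I0.card ≤ N + S.card := by
        have h2 := Finset.card_union_add_card_inter (Iset x a η) I0
        rw [← hS_def] at h2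
        have h3 : (Iset x a η ∪ I0).card ≤ N := (Finset.card_le_univ _).trans_eq (by simp)
        omega
      have hMlb : (ρ + q - 1) * N ≤ (S.card : ℝ) := by
        have h3 : ρ * N ≤ ((Iset x a η).card : ℝ) := by
          have h4 := hρle η hη0
          calc ρ * N ≤ (((Iset x a η).card : ℝ) / N) * N :=
                mul_le_mul_of_nonneg_right h4 hNR.le
            _ = ((Iset x a η).card : ℝ) := by field_simp
        have h4 : q * N = (I0.card : ℝ) := by rw [hq_def]; field_simp
        have h5 : ((Iset x a η).card : ℝ) + (I0.card : ℝ) ≤ (N : ℝ) + (S.card : ℝ) := by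
          exact_mod_cast hMcard
        linarith
      have hlow : (N:ℝ) * (q * s) ≤ ∑ k, Real.exp (-(γ₁ * |y k - dotR (x k) θo|)) := by
        have h6 : ∀ k ∈ I0, s ≤ Real.exp (-(γ₁ * |y k - dotR (x k) θo|)) := by
          intro k hk
          have hvk : |v k| ≤ ε := by
            rw [hI0_def] at hk
            simpa using hk
          have h7 : y k - dotR (x k) θo = v k := by rw [hy k]; ring
          rw [h7, hs_def]
          exact Real.exp_le_exp.mpr (by nlinarith [abs_nonneg (v k)])
        calc (N:ℝ) * (q * s) = (I0.card : ℝ) * s := by rw [hq_def]; field_simp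
          _ = ∑ _k ∈ I0, s := by simp [Finset.sum_const, nsmul_eq_mul]
          _ ≤ ∑ k ∈ I0, Real.exp (-(γ₁ * |y k - dotR (x k) θo|)) := Finset.sum_le_sum h6
          _ ≤ ∑ k, Real.exp (-(γ₁ * |y k - dotR (x k) θo|)) :=
              Finset.sum_le_sum_of_subset_of_nonneg (Finset.subset_univ _)
                (fun k _ _ => (Real.exp_pos _).le)
      have hup : ∑ k, Real.exp (-(γ₁ * |y k - dotR (x k) θs|)) ≤
          (S.card : ℝ) * c + ((N:ℝ) - S.card) := by
        have hsplit := Finset.sum_sdiff (Finset.subset_univ S)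
          (f := fun k => Real.exp (-(γ₁ * |y k - dotR (x k) θs|)))
        have hA : ∑ k ∈ S, Real.exp (-(γ₁ * |y k - dotR (x k) θs|)) ≤ (S.card : ℝ) * c := by
          have hterm : ∀ k ∈ S, Real.exp (-(γ₁ * |y k - dotR (x k) θs|)) ≤ c := by
            intro k hk
            rw [hS_def, Finset.mem_inter] at hk
            obtain ⟨hk1, hk2⟩ := hk
            rw [Iset, Finset.mem_filter] at hk1
            have hk1' : a * nrm (x k) * nrm η ≤ |dotR (x k) η| := hk1.2
            have hvk : |v k| ≤ ε := by
              rw [hI0_def] at hk2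
              simpa using hk2
            have hyk : y k - dotR (x k) θs = v k - dotR (x k) η := by
              rw [hy k, hη_def, dotR_sub']; ring
            have h8 : D ≤ |dotR (x k) η| := by
              refine le_trans ?_ hk1'
              rw [hD_def]
              have := hrle k
              nlinarith
            have h7 : D - ε ≤ |v k - dotR (x k) η| := by
              calc D - ε ≤ |dotR (x k) η| - |v k| := by linarith
                _ ≤ |dotR (x k) η - v k| := abs_sub_abs_le_abs_sub _ _
                _ = |v k - dotR (x k) η| := abs_sub_comm _ _
            have h9 : max (D - ε) 0 ≤ |v k - dotR (x k) η| := max_le h7 (abs_nonneg _)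
            rw [hyk, hc_def]
            exact Real.exp_le_exp.mpr (by nlinarith)
          calc ∑ k ∈ S, Real.exp (-(γ₁ * |y k - dotR (x k) θs|)) ≤ ∑ _k ∈ S, c :=
                Finset.sum_le_sum hterm
            _ = (S.card : ℝ) * c := by rw [Finset.sum_const, nsmul_eq_mul]
        have hB : ∑ k ∈ Finset.univ \ S, Real.exp (-(γ₁ * |y k - dotR (x k) θs|)) ≤
            ((Finset.univ \ S).card : ℝ) := by
          calc ∑ k ∈ Finset.univ \ S, Real.exp (-(γ₁ * |y k - dotR (x k) θs|)) ≤
              ∑ _k ∈ Finset.univ \ S, (1:ℝ) := Finset.sum_le_sum (fun k _ =>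
                Real.exp_le_one_iff.mpr (by nlinarith [abs_nonneg (y k - dotR (x k) θs)]))
            _ = ((Finset.univ \ S).card : ℝ) := by rw [Finset.sum_const, nsmul_eq_mul, mul_one]
        have hcard' : ((Finset.univ \ S).card : ℝ) = (N:ℝ) - S.card := by
          rw [Finset.card_sdiff_of_subset (Finset.subset_univ S)]
          have hSN : S.card ≤ N := (Finset.card_le_univ _).trans_eq (by simp)
          have : (Finset.univ : Finset (Fin N)).card = N := by simp
          rw [this]
          push_cast [Nat.cast_sub hSN]
          ring
        rw [hcard'] at hB
        linarith
      have hchain : (N:ℝ) * (q * s) ≤ (S.card : ℝ) * c + ((N:ℝ) - S.card) :=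
        hlow.trans ((hmax θo).trans hup)
      have hkey : (ρ + q - 1) * (1 - c) ≤ 1 - q * s := by
        have h10 : (S.card : ℝ) * (1 - c) ≤ (N:ℝ) * (1 - q * s) := by nlinarith
        have h11 : (ρ + q - 1) * (N:ℝ) * (1 - c) ≤ (S.card : ℝ) * (1 - c) :=
          mul_le_mul_of_nonneg_right hMlb (by linarith)
        nlinarith
      have hμc : muVal s q ρ ≤ s * c := by
        have h12 : muVal s q ρ * (q + ρ - 1) = ρ + s * q * (1 + s) - (1 + s) := by
          rw [muVal]; field_simp
        have h13 : ρ + s * q * (1 + s) - (1 + s) ≤ s * c * (q + ρ - 1) := by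
          nlinarith [mul_nonneg (sub_nonneg.mpr hs1) (sub_nonneg.mpr hρ1),
            mul_le_mul_of_nonneg_left hkey hs0.le]
        nlinarith
      have hexp : muVal s q ρ ≤ Real.exp (-(γ₁ * D)) := by
        have h14 : Real.exp (-(γ₁ * D)) = s * Real.exp (-(γ₁ * (D - ε))) := by
          rw [hs_def, ← Real.exp_add]
          ring_nf
        rw [h14]
        have h15 : c ≤ Real.exp (-(γ₁ * (D - ε))) := by
          rw [hc_def]
          exact Real.exp_le_exp.mpr (by nlinarith [le_max_left (D - ε) (0:ℝ)])
        calc muVal s q ρ ≤ s * c := hμc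
          _ ≤ s * Real.exp (-(γ₁ * (D - ε))) := mul_le_mul_of_nonneg_left h15 hs0.le
      have hfinal : γ₁ * D ≤ Real.log (1 / muVal s q ρ) := by
        have h16 := Real.log_le_log hμpos hexp
        rw [Real.log_exp] at h16
        rw [one_div, Real.log_inv]
        linarith
      rw [one_div_mul_eq_div, le_div_iff₀ (by positivity)]
      calc nrm η * (γ₁ * a * r) = γ₁ * D := by rw [hD_def]; ring
        _ ≤ _ := hfinal
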